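/- Let n, M ∈ ℕ, let h_1, …, h_M : ℝⁿ → ℝ be convex continuous functions, and let W := {z ∈ ℝⁿ : h_m(z) ≤ 0 for all m ∈ [M]} be nonempty. Let G : ℝⁿ → ℝ be continuous and ρ-strongly convex for some ρ > 0, let ẑ be the unique minimizer of G over W, and for each ℓ > 0 let ẑ_ℓ be the unique minimizer over ℝⁿ of z ↦ G(z) + g(z; ℓ), where g(z; ℓ) := Σ_{m=1}^M ln(1 + e^{ℓ·h_m(z)}). Assume the Slater-density condition: for every δ > 0 there exists z̃ ∈ ℝⁿ with ‖z̃ − ẑ‖ < δ and h_m(z̃) < 0 for all m ∈ [M]. Then ẑ_ℓ → ẑ as ℓ → ∞. -/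

import Mathlib

open Filter Set Real
open scoped RealInnerProductSpace

/-- `t ↦ log (1 + exp t)` is convex. -/
lemma convexOn_log_one_add_exp : ConvexOn ℝ Set.univ (fun t : ℝ => Real.log (1 + Real.exp t)) := by
  have hpos : ∀ t : ℝ, (0:ℝ) < 1 + Real.exp t := fun t => by positivity
  apply convexOn_of_hasDerivWithinAt2_nonneg (f' := fun t => Real.exp t / (1 + Real.exp t))
      (f'' := fun t => Real.exp t / (1 + Real.exp t) ^ 2) convex_univ
  · exact ((continuous_const.add Real.continuous_exp).log (fun t => (hpos t).ne')).continuousOn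
  · intro t _
    exact (((Real.hasDerivAt_exp t).const_add 1).log (hpos t).ne').hasDerivWithinAt
  · intro t _
    have h1 : HasDerivAt (fun s : ℝ => 1 + Real.exp s) (Real.exp t) t :=
      (Real.hasDerivAt_exp t).const_add 1
    have h2 := (Real.hasDerivAt_exp t).div h1 (hpos t).ne'
    have heq : (Real.exp t * (1 + Real.exp t) - Real.exp t * Real.exp t) / (1 + Real.exp t) ^ 2
        = Real.exp t / (1 + Real.exp t) ^ 2 := by ring_nf
    rw [heq] at h2
    exact h2.hasDerivWithinAt
  · intro t _
    positivity

lemma mono_log_one_add_exp : Monotone (fun t : ℝ => Real.log (1 + Real.exp t)) := by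
  intro a b hab
  exact Real.log_le_log (by positivity) (by gcongr)

lemma nonneg_log_one_add_exp (t : ℝ) : 0 ≤ Real.log (1 + Real.exp t) :=
  Real.log_nonneg (by linarith [Real.exp_pos t])

lemma le_log_one_add_exp (t : ℝ) : t ≤ Real.log (1 + Real.exp t) := by
  calc t = Real.log (Real.exp t) := (Real.log_exp t).symm
  _ ≤ Real.log (1 + Real.exp t) :=
      Real.log_le_log (Real.exp_pos t) (by linarith [Real.exp_pos t])

/-- Strong-convexity growth inequality at a global minimizer. -/
lemma strong_min_ineq {E : Type*} [NormedAddCommGroup E] [InnerProductSpace ℝ E]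
    {F : E → ℝ} {ρ : ℝ}
    (hconv : ConvexOn ℝ Set.univ (fun z => F z - ρ / 2 * ‖z‖ ^ 2))
    {x : E} (hx : IsMinOn F Set.univ x) (y : E) :
    F x + ρ / 2 * ‖y - x‖ ^ 2 ≤ F y := by
  have hs : StrongConvexOn Set.univ ρ F := strongConvexOn_iff_convex.mpr hconv
  have key : ∀ a ∈ Set.Ioo (0:ℝ) 1, F x + (1 - a) * (ρ / 2 * ‖y - x‖ ^ 2) ≤ F y := by
    intro a ha
    have h1 : F (a • y + (1 - a) • x)
        ≤ a • F y + (1 - a) • F x - a * (1 - a) * (ρ / 2 * ‖y - x‖ ^ 2) :=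
      hs.2 (Set.mem_univ y) (Set.mem_univ x) ha.1.le (by linarith [ha.2]) (by ring)
    have h2 : F x ≤ F (a • y + (1 - a) • x) := hx (Set.mem_univ _)
    simp only [smul_eq_mul] at h1
    have h3 : a * (F x + (1 - a) * (ρ / 2 * ‖y - x‖ ^ 2)) ≤ a * F y := by nlinarith [ha.1]
    exact le_of_mul_le_mul_left h3 ha.1
  have hev : ∀ᶠ a in nhdsWithin (0:ℝ) (Set.Ioi 0),
      F x + (1 - a) * (ρ / 2 * ‖y - x‖ ^ 2) ≤ F y := by
    filter_upwards [Ioo_mem_nhdsGT_of_mem (Set.mem_Ico.2 ⟨le_refl (0:ℝ), zero_lt_one⟩)] with a ha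
    exact key a ha
  have hlim : Tendsto (fun a : ℝ => F x + (1 - a) * (ρ / 2 * ‖y - x‖ ^ 2))
      (nhdsWithin (0:ℝ) (Set.Ioi 0)) (nhds (F x + (1 - 0) * (ρ / 2 * ‖y - x‖ ^ 2))) := by
    apply Tendsto.mono_left _ nhdsWithin_le_nhds
    exact (continuous_const.add
      ((continuous_const.sub continuous_id).mul continuous_const)).tendsto 0
  have := le_of_tendsto hlim hev
  simpa using this

/-- Coercive lower bound for a strongly convex continuous function. -/
lemma coercive_bound {E : Type*} [NormedAddCommGroup E] [InnerProductSpace ℝ E] [ProperSpace E]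
    {G : E → ℝ} (hGcont : Continuous G) {ρ : ℝ}
    (hGstrong : ConvexOn ℝ Set.univ (fun z => G z - ρ / 2 * ‖z‖ ^ 2)) (z0 : E) :
    ∃ K : ℝ, 0 ≤ K ∧ ∀ z, G z0 - K * (1 + ‖z - z0‖) + ρ / 2 * ‖z - z0‖ ^ 2 ≤ G z := by
  set ψ : E → ℝ := fun z => G z - ρ / 2 * ‖z - z0‖ ^ 2 with hψ
  have hψconv : ConvexOn ℝ Set.univ ψ := by
    have hlin : ConvexOn ℝ Set.univ (fun z : E => ρ * ⟪z, z0⟫ - ρ / 2 * ‖z0‖ ^ 2) := by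
      refine ⟨convex_univ, ?_⟩
      intro x _ y _ a b ha hb hab
      simp only [smul_eq_mul, inner_add_left, real_inner_smul_left]
      apply le_of_eq
      linear_combination (ρ / 2 * ‖z0‖ ^ 2) * hab
    have heq : ψ = fun z => (G z - ρ / 2 * ‖z‖ ^ 2) + (ρ * ⟪z, z0⟫ - ρ / 2 * ‖z0‖ ^ 2) := by
      funext z
      simp only [hψ]
      rw [norm_sub_sq_real]
      ring
    rw [heq]
    exact hGstrong.add hlin
  have hψcont : Continuous ψ := by
    apply hGcont.sub
    exact continuous_const.mul (((continuous_id.sub continuous_const).norm.pow 2))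
  obtain ⟨w, hwmem, hwmin⟩ := (isCompact_closedBall z0 1).exists_isMinOn
    ⟨z0, Metric.mem_closedBall_self zero_le_one⟩ hψcont.continuousOn
  refine ⟨ψ z0 - ψ w, sub_nonneg.2 (hwmin (Metric.mem_closedBall_self zero_le_one)), ?_⟩
  intro z
  set K := ψ z0 - ψ w with hKdef
  have hK : 0 ≤ K := sub_nonneg.2 (hwmin (Metric.mem_closedBall_self zero_le_one))
  set d := ‖z - z0‖ with hd
  have hd0 : 0 ≤ d := norm_nonneg _
  have hψz0 : ψ z0 = G z0 := by simp [hψ]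
  have hGz : G z = ψ z + ρ / 2 * d ^ 2 := by simp [hψ]; rw [hd]; ring
  clear_value ψ K d
  suffices hkey : ψ z0 - K * (1 + d) ≤ ψ z by
    rw [hGz, ← hψz0]; linarith
  rcases le_or_gt d 1 with hcase | hcase
  · have hzmem : z ∈ Metric.closedBall z0 1 := by
      rw [Metric.mem_closedBall, dist_eq_norm, ← hd]; exact hcase
    have h5 : ψ w ≤ ψ z := hwmin hzmem
    nlinarith [mul_nonneg hK hd0]
  · have hdpos : 0 < d := lt_trans zero_lt_one hcase
    set u : E := z0 + d⁻¹ • (z - z0) with hu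
    have humem : u ∈ Metric.closedBall z0 1 := by
      rw [Metric.mem_closedBall, dist_eq_norm]
      have : u - z0 = d⁻¹ • (z - z0) := by rw [hu]; abel
      rw [this, norm_smul, norm_inv, Real.norm_eq_abs, abs_of_pos hdpos, ← hd,
        inv_mul_cancel₀ hdpos.ne']
    have hcomb : u = (1 - d⁻¹) • z0 + d⁻¹ • z := by
      rw [hu, hd, smul_sub]; module
    clear_value u
    have ha : (0:ℝ) ≤ 1 - d⁻¹ := by
      have : d⁻¹ ≤ 1 := by
        rw [inv_le_one_iff₀]; right; exact hcase.le
      linarith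
    have hb : (0:ℝ) ≤ d⁻¹ := inv_nonneg.2 hd0
    have hconvineq := hψconv.2 (Set.mem_univ z0) (Set.mem_univ z) ha hb (by ring)
    rw [← hcomb] at hconvineq
    simp only [smul_eq_mul] at hconvineq
    have hwu : ψ w ≤ ψ u := hwmin humem
    have hdd : d * d⁻¹ = 1 := mul_inv_cancel₀ hdpos.ne'
    have hexp : d * ((1 - d⁻¹) * ψ z0 + d⁻¹ * ψ z) = (d - 1) * ψ z0 + ψ z := by
      field_simp
    have h1 : ψ z0 - K ≤ ψ u := by linarith [hwu]
    have h2 : d * (ψ z0 - K) ≤ d * ψ u := mul_le_mul_of_nonneg_left h1 hd0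
    have h3 : d * ψ u ≤ (d - 1) * ψ z0 + ψ z := by
      calc d * ψ u ≤ d * ((1 - d⁻¹) * ψ z0 + d⁻¹ * ψ z) :=
            mul_le_mul_of_nonneg_left hconvineq hd0
        _ = (d - 1) * ψ z0 + ψ z := hexp
    nlinarith [h2, h3, hK, mul_nonneg hK hd0]

set_option maxHeartbeats 2000000 in
/-- Proposition 3.2: pointwise convergence of the log-penalized unconstrained minimizers
to the constrained minimizer. -/
theorem penalized_minimizers_tendsto_constrained_minimizer
    (n M : ℕ) (h : Fin M → EuclideanSpace ℝ (Fin n) → ℝ)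
    (hconvex : ∀ m, ConvexOn ℝ Set.univ (h m)) (hcont : ∀ m, Continuous (h m))
    (W : Set (EuclideanSpace ℝ (Fin n)))
    (hWdef : W = {z | ∀ m, h m z ≤ 0}) (hWne : W.Nonempty)
    (G : EuclideanSpace ℝ (Fin n) → ℝ) (hGcont : Continuous G)
    (ρ : ℝ) (hρ : 0 < ρ)
    (hGstrong : ConvexOn ℝ Set.univ (fun z => G z - ρ / 2 * ‖z‖ ^ 2))
    (zhat : EuclideanSpace ℝ (Fin n)) (hzhatW : zhat ∈ W)
    (hzhatmin : IsMinOn G W zhat)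
    (hzhatuniq : ∀ y ∈ W, IsMinOn G W y → y = zhat)
    (g : EuclideanSpace ℝ (Fin n) → ℝ → ℝ)
    (hg : ∀ z ℓ, g z ℓ = ∑ m, Real.log (1 + Real.exp (ℓ * h m z)))
    (zpen : ℝ → EuclideanSpace ℝ (Fin n))
    (hzpenmin : ∀ ℓ : ℝ, 0 < ℓ → IsMinOn (fun z => G z + g z ℓ) Set.univ (zpen ℓ))
    (hzpenuniq : ∀ ℓ : ℝ, 0 < ℓ →
      ∀ y, IsMinOn (fun z => G z + g z ℓ) Set.univ y → y = zpen ℓ)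
    (hslater : ∀ δ : ℝ, 0 < δ → ∃ zt : EuclideanSpace ℝ (Fin n),
      ‖zt - zhat‖ < δ ∧ ∀ m, h m zt < 0) :
    Tendsto zpen atTop (nhds zhat) := by
  classical
  rcases Nat.eq_zero_or_pos M with hM0 | hMpos
  -- Degenerate case `M = 0` : no constraints, `g = 0`, `W = univ`.
  · subst hM0
    have hg0 : ∀ z ℓ, g z ℓ = 0 := by intro z ℓ; rw [hg]; simp
    have hWuniv : W = Set.univ := by rw [hWdef]; ext z; simp
    have hconst : ∀ ℓ : ℝ, 1 ≤ ℓ → zpen ℓ = zhat := by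
      intro ℓ hℓ
      have hpos : (0:ℝ) < ℓ := lt_of_lt_of_le zero_lt_one hℓ
      have hmin : IsMinOn (fun z => G z + g z ℓ) Set.univ zhat := by
        intro y hy
        have h1 : G zhat ≤ G y := hzhatmin (by rw [hWuniv]; exact Set.mem_univ y)
        simp only [Set.mem_setOf_eq, hg0]
        linarith
      exact (hzpenuniq ℓ hpos zhat hmin).symm
    have hev : (fun _ : ℝ => zhat) =ᶠ[atTop] zpen :=
      eventually_atTop.2 ⟨1, fun ℓ hℓ => (hconst ℓ hℓ).symm⟩
    exact Tendsto.congr' hev tendsto_const_nhds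
  -- Main case `0 < M`.
  haveI : Nonempty (Fin M) := ⟨⟨0, hMpos⟩⟩
  -- Nonnegativity of the penalty.
  have hgnn : ∀ z ℓ, 0 ≤ g z ℓ := by
    intro z ℓ; rw [hg]
    exact Finset.sum_nonneg fun m _ => nonneg_log_one_add_exp _
  -- Convexity of the penalty.
  have hgconv : ∀ ℓ : ℝ, 0 < ℓ → ConvexOn ℝ Set.univ (fun z => g z ℓ) := by
    intro ℓ hℓ
    have hgm : ∀ m : Fin M,
        ConvexOn ℝ Set.univ (fun z => Real.log (1 + Real.exp (ℓ * h m z))) := by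
      intro m
      refine ⟨convex_univ, fun xx _ yy _ a b ha hb hab => ?_⟩
      have hcv := (hconvex m).2 (Set.mem_univ xx) (Set.mem_univ yy) ha hb hab
      simp only [smul_eq_mul] at hcv ⊢
      have hstep1 : Real.log (1 + Real.exp (ℓ * h m (a • xx + b • yy)))
          ≤ Real.log (1 + Real.exp (ℓ * (a * h m xx + b * h m yy))) :=
        mono_log_one_add_exp (mul_le_mul_of_nonneg_left hcv hℓ.le)
      have hstep2 := convexOn_log_one_add_exp.2 (Set.mem_univ (ℓ * h m xx))
        (Set.mem_univ (ℓ * h m yy)) ha hb hab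
      simp only [smul_eq_mul] at hstep2
      have heq2 : a * (ℓ * h m xx) + b * (ℓ * h m yy) = ℓ * (a * h m xx + b * h m yy) := by
        ring
      rw [heq2] at hstep2
      exact le_trans hstep1 hstep2
    refine ⟨convex_univ, fun x _ y _ a b ha hb hab => ?_⟩
    simp only [smul_eq_mul, hg, Finset.mul_sum, ← Finset.sum_add_distrib]
    apply Finset.sum_le_sum
    intro m _
    have := (hgm m).2 (Set.mem_univ x) (Set.mem_univ y) ha hb hab
    simpa using this
  -- Strong-convexity growth inequality at the penalized minimizers.
  have hstrongmin : ∀ ℓ : ℝ, 0 < ℓ → ∀ y,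
      (G (zpen ℓ) + g (zpen ℓ) ℓ) + ρ / 2 * ‖y - zpen ℓ‖ ^ 2 ≤ G y + g y ℓ := by
    intro ℓ hℓ y
    have h1 : ConvexOn ℝ Set.univ (fun z => (G z - ρ / 2 * ‖z‖ ^ 2) + g z ℓ) :=
      hGstrong.add (hgconv ℓ hℓ)
    have heq : (fun z : EuclideanSpace ℝ (Fin n) => (G z - ρ / 2 * ‖z‖ ^ 2) + g z ℓ)
        = (fun z => (G z + g z ℓ) - ρ / 2 * ‖z‖ ^ 2) := funext fun z => by ring
    rw [heq] at h1
    exact strong_min_ineq h1 (hzpenmin ℓ hℓ) y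
  -- Coercive lower bound for G.
  obtain ⟨K, hK0, hKbound⟩ := coercive_bound hGcont hGstrong zhat
  rw [Metric.tendsto_atTop]
  intro ε hε
  set η := ρ * ε ^ 2 / 25 with hηdef
  have hηpos : 0 < η := by positivity
  clear_value η
  -- modulus of continuity of G at zhat
  have hGat : ContinuousAt G zhat := hGcont.continuousAt
  rw [Metric.continuousAt_iff] at hGat
  obtain ⟨δ₀, hδ₀pos, hδ₀⟩ := hGat η hηpos
  set δ := min δ₀ (ε / 2) with hδdef
  have hδpos : 0 < δ := lt_min hδ₀pos (by positivity)
  have hδδ₀ : δ ≤ δ₀ := min_le_left _ _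
  have hδε2 : δ ≤ ε / 2 := min_le_right _ _
  clear_value δ
  -- Slater point
  obtain ⟨zt, hztnear, hzth⟩ := hslater δ hδpos
  have hztδ₀ : dist zt zhat < δ₀ := by
    rw [dist_eq_norm]; exact lt_of_lt_of_le hztnear hδδ₀
  have hGzt : G zt < G zhat + η := by
    have := hδ₀ hztδ₀
    rw [Real.dist_eq] at this
    have := (abs_lt.mp this).2
    linarith
  -- penalty at the Slater point tends to 0
  have hpen0 : Tendsto (fun ℓ => g zt ℓ) atTop (nhds 0) := by
    have heq : (fun ℓ => g zt ℓ)
        = fun ℓ => ∑ m, Real.log (1 + Real.exp (ℓ * h m zt)) := funext fun ℓ => hg zt ℓ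
    rw [heq]
    have hzero : (0:ℝ) = ∑ _m : Fin M, (0:ℝ) := by simp
    rw [hzero]
    apply tendsto_finset_sum
    intro m _
    have hneg : h m zt < 0 := hzth m
    have h1 : Tendsto (fun ℓ : ℝ => ℓ * h m zt) atTop atBot :=
      Tendsto.atTop_mul_const_of_neg hneg tendsto_id
    have h2 : Tendsto (fun ℓ : ℝ => Real.exp (ℓ * h m zt)) atTop (nhds 0) :=
      Real.tendsto_exp_atBot.comp h1
    have h3 : Tendsto (fun ℓ : ℝ => 1 + Real.exp (ℓ * h m zt)) atTop (nhds 1) := by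
      have h3' : Tendsto (fun ℓ : ℝ => 1 + Real.exp (ℓ * h m zt)) atTop (nhds (1 + 0)) :=
        h2.const_add 1
      norm_num at h3'
      exact h3'
    have h4 := (Real.continuousAt_log (by norm_num : (1:ℝ) ≠ 0)).tendsto.comp h3
    simpa [Function.comp_def] using h4
  -- uniform bound on the minimizers
  set R := max 1 ((4 * η + 4 * K) / ρ) with hRdef
  have hR1 : (1:ℝ) ≤ R := le_max_left _ _
  have hR2 : (4 * η + 4 * K) / ρ ≤ R := le_max_right _ _
  clear_value R
  have hbound : ∀ ℓ : ℝ, 1 ≤ ℓ → g zt ℓ ≤ η →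
      ‖zpen ℓ - zhat‖ ≤ R ∧ G (zpen ℓ) + g (zpen ℓ) ℓ ≤ G zhat + 2 * η := by
    intro ℓ hℓ1 hpenℓ
    have hℓpos : (0:ℝ) < ℓ := lt_of_lt_of_le zero_lt_one hℓ1
    have hminzt : G (zpen ℓ) + g (zpen ℓ) ℓ ≤ G zt + g zt ℓ :=
      hzpenmin ℓ hℓpos (Set.mem_univ zt)
    have hFB : G (zpen ℓ) + g (zpen ℓ) ℓ ≤ G zhat + 2 * η := by linarith
    refine ⟨?_, hFB⟩
    have hGle : G (zpen ℓ) ≤ G zhat + 2 * η := by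
      have := hgnn (zpen ℓ) ℓ; linarith
    have hco := hKbound (zpen ℓ)
    set d := ‖zpen ℓ - zhat‖ with hd
    have hd0 : (0:ℝ) ≤ d := norm_nonneg _
    clear_value d
    by_contra hcon
    push_neg at hcon
    have hd1 : 1 < d := lt_of_le_of_lt hR1 hcon
    have hdR : (4 * η + 4 * K) / ρ < d := lt_of_le_of_lt hR2 hcon
    have hq : ρ / 2 * d ^ 2 ≤ 2 * η + K + K * d := by linarith
    have hlin2 : ρ / 2 * d ≤ 2 * η + 2 * K := by nlinarith
    have : d ≤ (4 * η + 4 * K) / ρ := by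
      rw [le_div_iff₀ hρ]; nlinarith
    linarith
  -- the margin of the Slater point
  set σ := Finset.univ.inf' Finset.univ_nonempty (fun m => -(h m zt)) with hσdef
  have hσpos : 0 < σ := by
    rw [hσdef, Finset.lt_inf'_iff]
    exact fun m _ => neg_pos.2 (hzth m)
  have hσle : ∀ m, h m zt ≤ -σ := by
    intro m
    have := Finset.inf'_le (fun m => -(h m zt)) (Finset.mem_univ m)
    rw [← hσdef] at this
    linarith
  clear_value σ
  -- uniform continuity on a compact ball
  have hUC := (isCompact_closedBall zhat (R + δ)).uniformContinuousOn_of_continuous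
    hGcont.continuousOn
  rw [Metric.uniformContinuousOn_iff] at hUC
  obtain ⟨θ, hθpos, hθ⟩ := hUC η hηpos
  set τ := θ * σ / (2 * (R + δ + 1)) with hτdef
  have hRδpos : (0:ℝ) < R + δ + 1 := by linarith
  have hτpos : 0 < τ := by positivity
  clear_value τ
  -- thresholds
  obtain ⟨N₁, hN₁⟩ := Metric.tendsto_atTop.mp hpen0 η hηpos
  refine ⟨max (max 1 N₁) ((2 * η + K * (1 + R)) / τ + 1), ?_⟩
  intro ℓ hℓN
  have hℓ1 : (1:ℝ) ≤ ℓ := le_trans (le_trans (le_max_left _ _) (le_max_left _ _)) hℓN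
  have hℓpos : (0:ℝ) < ℓ := lt_of_lt_of_le zero_lt_one hℓ1
  have hℓN₁ : N₁ ≤ ℓ := le_trans (le_trans (le_max_right _ _) (le_max_left _ _)) hℓN
  have hℓτbig : 2 * η + K * (1 + R) < ℓ * τ := by
    have h1 : (2 * η + K * (1 + R)) / τ + 1 ≤ ℓ := le_trans (le_max_right _ _) hℓN
    have h2 : (2 * η + K * (1 + R)) / τ < ℓ := by linarith
    calc 2 * η + K * (1 + R) = (2 * η + K * (1 + R)) / τ * τ := by field_simp
      _ < ℓ * τ := by exact mul_lt_mul_of_pos_right h2 hτpos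
  have hpenℓ : g zt ℓ ≤ η := by
    have := hN₁ ℓ hℓN₁
    rw [Real.dist_eq] at this
    have := (abs_lt.mp this).2
    linarith
  obtain ⟨hdR, hFB⟩ := hbound ℓ hℓ1 hpenℓ
  set x := zpen ℓ with hxdef
  clear_value x
  -- lower bound for G at the minimizer
  have hGxlow : G zhat - K * (1 + R) ≤ G x := by
    have hco := hKbound x
    have hd0 : (0:ℝ) ≤ ‖x - zhat‖ := norm_nonneg _
    have hKd : K * (1 + ‖x - zhat‖) ≤ K * (1 + R) :=
      mul_le_mul_of_nonneg_left (by linarith) hK0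
    have hq0 : 0 ≤ ρ / 2 * ‖x - zhat‖ ^ 2 := by positivity
    linarith
  -- near-feasibility of the minimizer
  have hfeas : ∀ m, h m x ≤ τ := by
    intro m
    by_contra hcon
    push_neg at hcon
    have hterm : ℓ * τ ≤ g x ℓ := by
      rw [hg]
      calc ℓ * τ ≤ ℓ * h m x := mul_le_mul_of_nonneg_left hcon.le (by linarith)
        _ ≤ Real.log (1 + Real.exp (ℓ * h m x)) := le_log_one_add_exp _
        _ ≤ ∑ m', Real.log (1 + Real.exp (ℓ * h m' x)) :=
            Finset.single_le_sum (f := fun m' => Real.log (1 + Real.exp (ℓ * h m' x)))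
              (fun i _ => nonneg_log_one_add_exp _) (Finset.mem_univ m)
    linarith
  -- project to a feasible point using the Slater point
  set lam := τ / (τ + σ) with hlamdef
  have hτσpos : 0 < τ + σ := by linarith
  have hlampos : 0 < lam := by positivity
  have hlamlt : lam < 1 := by
    rw [hlamdef, div_lt_one hτσpos]; linarith
  have hlam1 : (0:ℝ) ≤ 1 - lam := by linarith
  clear_value lam
  set x' := lam • zt + (1 - lam) • x with hx'def
  clear_value x'
  have hlamτσ : lam * (τ + σ) = τ := by
    rw [hlamdef]; field_simp
  have hx'W : x' ∈ W := by
    rw [hWdef]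
    intro m
    have hcm := (hconvex m).2 (Set.mem_univ zt) (Set.mem_univ x) hlampos.le hlam1 (by ring)
    simp only [smul_eq_mul] at hcm
    rw [← hx'def] at hcm
    have hb1 : lam * h m zt ≤ lam * (-σ) := mul_le_mul_of_nonneg_left (hσle m) hlampos.le
    have hb2 : (1 - lam) * h m x ≤ (1 - lam) * τ := mul_le_mul_of_nonneg_left (hfeas m) hlam1
    have : h m x' ≤ lam * (-σ) + (1 - lam) * τ := le_trans hcm (by linarith)
    have hzero : lam * (-σ) + (1 - lam) * τ = 0 := by linear_combination (-1 : ℝ) * hlamτσ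
    rw [hzero] at this
    exact this
  have hGx' : G zhat ≤ G x' := hzhatmin hx'W
  -- memberships in the compact ball
  have hxK : x ∈ Metric.closedBall zhat (R + δ) := by
    rw [Metric.mem_closedBall, dist_eq_norm]; linarith
  have hztK : zt ∈ Metric.closedBall zhat (R + δ) := by
    rw [Metric.mem_closedBall, dist_eq_norm]
    have hR0 : (0:ℝ) ≤ R := le_trans zero_le_one hR1
    linarith
  have hx'K : x' ∈ Metric.closedBall zhat (R + δ) := by
    rw [hx'def]
    exact (convex_closedBall zhat (R + δ)) hztK hxK hlampos.le hlam1 (by ring)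
  -- distance from x to x'
  have hxx' : x - x' = lam • (x - zt) := by
    rw [hx'def]; module
  have hxzt : ‖x - zt‖ ≤ R + δ := by
    calc ‖x - zt‖ ≤ ‖x - zhat‖ + ‖zhat - zt‖ := norm_sub_le_norm_sub_add_norm_sub _ _ _
      _ ≤ R + δ := by
          have : ‖zhat - zt‖ = ‖zt - zhat‖ := norm_sub_rev _ _
          rw [this]; linarith
  have hdistxx' : dist x x' < θ := by
    rw [dist_eq_norm, hxx', norm_smul, Real.norm_eq_abs, abs_of_pos hlampos]
    have hlamle : lam ≤ τ / σ := by
      rw [hlamdef]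
      gcongr
      linarith
    have hτσθ : τ / σ = θ / (2 * (R + δ + 1)) := by
      rw [hτdef]; field_simp
    calc lam * ‖x - zt‖ ≤ (τ / σ) * (R + δ) := by
          apply mul_le_mul hlamle hxzt (norm_nonneg _) (by positivity)
      _ = θ * ((R + δ) / (2 * (R + δ + 1))) := by rw [hτσθ]; ring
      _ < θ * 1 := by
          apply mul_lt_mul_of_pos_left _ hθpos
          rw [div_lt_one (by linarith)]
          linarith
      _ = θ := mul_one θ
  have hGxG' : dist (G x) (G x') < η := hθ x hxK x' hx'K hdistxx'
  have hGxlow2 : G zhat - η ≤ G x := by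
    rw [Real.dist_eq] at hGxG'
    have := (abs_lt.mp hGxG').1
    linarith
  -- conclude via the strong convexity inequality
  have hsm := hstrongmin ℓ hℓpos zt
  rw [← hxdef] at hsm
  have hgx : 0 ≤ g x ℓ := hgnn x ℓ
  have hquad : ρ / 2 * ‖zt - x‖ ^ 2 ≤ 3 * η := by
    have h1 : G x + g x ℓ + ρ / 2 * ‖zt - x‖ ^ 2 ≤ G zt + g zt ℓ := hsm
    linarith
  have hε2 : 0 < ε ^ 2 := by positivity
  have hsq : ‖zt - x‖ ^ 2 < (ε / 2) ^ 2 := by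
    have h2 : ‖zt - x‖ ^ 2 ≤ 6 * ε ^ 2 / 25 := by
      have hρ2 : (0:ℝ) < ρ / 2 := by positivity
      have hh : ρ / 2 * ‖zt - x‖ ^ 2 ≤ ρ / 2 * (6 * ε ^ 2 / 25) := by
        rw [hηdef] at hquad; linarith
      exact le_of_mul_le_mul_left hh hρ2
    have hhalf : (ε / 2) ^ 2 = ε ^ 2 / 4 := by ring
    rw [hhalf]
    linarith
  have hlt : ‖zt - x‖ < ε / 2 := lt_of_pow_lt_pow_left₀ 2 (by positivity) hsq
  rw [dist_eq_norm]
  calc ‖x - zhat‖ ≤ ‖x - zt‖ + ‖zt - zhat‖ := norm_sub_le_norm_sub_add_norm_sub _ _ _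
    _ < ε / 2 + δ := by
        have : ‖x - zt‖ = ‖zt - x‖ := norm_sub_rev _ _
        rw [this]
        linarith
    _ ≤ ε / 2 + ε / 2 := by linarith
    _ = ε := by ring
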